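/- Let X be a set, G a subgroup of the group of bijections of X, and ρ : G → ℝ a conjugation-invariant pseudo-norm. Let U ⊆ X and let φ, ψ ∈ G be supported in U. Then for every η ∈ G with η(U) ∩ U = ∅, one has ρ(φψφ⁻¹ψ⁻¹) ≤ 4 ρ(η). Consequently the displacement energy de(U, ρ) := inf{ρ(η) : η ∈ G, η(U) ∩ U = ∅} satisfies de(U, ρ) ≥ (1/4) ρ([φ, ψ]). (This is the Claim in the proof of the paper's Lemma 3.10.) -/

import Mathlib

/-- Let `G` be a subgroup of the group of bijections of `X`,
`ρ` a conjugation-invariant pseudo-norm on `G`, and `φ, ψ ∈ G` supported in `U ⊆ X`.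
Then every `η ∈ G` displacing `U` satisfies `ρ [φ, ψ] ≤ 4 ρ η`; consequently
`(1/4) ρ [φ, ψ]` is a lower bound for `{ρ η : η ∈ G, η(U) ∩ U = ∅}`, i.e.
the displacement energy `de(U, ρ)` satisfies `de(U, ρ) ≥ (1/4) ρ [φ, ψ]`. -/
theorem stmt_3 {X : Type*} (G : Subgroup (Equiv.Perm X)) (ρ : G → ℝ)
    (hnonneg : ∀ g, 0 ≤ ρ g) (hone : ρ 1 = 0)
    (hinv : ∀ g, ρ g⁻¹ = ρ g)
    (htri : ∀ g h, ρ (g * h) ≤ ρ g + ρ h)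
    (hconj : ∀ g h, ρ (h * g * h⁻¹) = ρ g)
    (U : Set X) (φ ψ : G)
    (hφ : ∀ p ∉ U, (φ : Equiv.Perm X) p = p)
    (hψ : ∀ p ∉ U, (ψ : Equiv.Perm X) p = p) :
    (∀ η : G, ⇑(η : Equiv.Perm X) '' U ∩ U = ∅ → ρ (φ * ψ * φ⁻¹ * ψ⁻¹) ≤ 4 * ρ η) ∧
      (1 / 4 * ρ (φ * ψ * φ⁻¹ * ψ⁻¹)) ∈
        lowerBounds {x : ℝ | ∃ η : G, ⇑(η : Equiv.Perm X) '' U ∩ U = ∅ ∧ ρ η = x} := by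
  have main : ∀ η : G, ⇑(η : Equiv.Perm X) '' U ∩ U = ∅ →
      ρ (φ * ψ * φ⁻¹ * ψ⁻¹) ≤ 4 * ρ η := by
    intro η hdisj
    -- the displaced set
    have hdisp : ∀ p ∈ U, (η : Equiv.Perm X) p ∉ U := by
      intro p hp hcon
      have : (η : Equiv.Perm X) p ∈ (⇑(η : Equiv.Perm X) '' U ∩ U) :=
        ⟨⟨p, hp, rfl⟩, hcon⟩
      simp [hdisj] at this
    set b : G := η * φ * η⁻¹ with hb
    -- b is supported in η(U)
    have hbsupp : ∀ p : X, p ∉ ⇑(η : Equiv.Perm X) '' U → (b : Equiv.Perm X) p = p := by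
      intro p hp
      have h1 : ((η : Equiv.Perm X))⁻¹ p ∉ U := by
        intro hcon
        exact hp ⟨_, hcon, by simp⟩
      have : (φ : Equiv.Perm X) (((η : Equiv.Perm X))⁻¹ p) = ((η : Equiv.Perm X))⁻¹ p :=
        hφ _ h1
      rw [Equiv.Perm.inv_def] at this
      simp [hb, Equiv.Perm.mul_apply, this]
    -- ψ(U) ⊆ U, b(ηU) ⊆ ηU
    have hψU : ∀ p ∈ U, (ψ : Equiv.Perm X) p ∈ U := by
      intro p hp
      by_contra hcon
      have h1 : (ψ : Equiv.Perm X) ((ψ : Equiv.Perm X) p) = (ψ : Equiv.Perm X) p := hψ _ hcon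
      have h2 : (ψ : Equiv.Perm X) p = p := (ψ : Equiv.Perm X).injective h1
      exact hcon (by rw [h2]; exact hp)
    have hbV : ∀ p ∈ ⇑(η : Equiv.Perm X) '' U, (b : Equiv.Perm X) p ∈ ⇑(η : Equiv.Perm X) '' U := by
      intro p hp
      by_contra hcon
      have h1 : (b : Equiv.Perm X) ((b : Equiv.Perm X) p) = (b : Equiv.Perm X) p := hbsupp _ hcon
      have h2 : (b : Equiv.Perm X) p = p := (b : Equiv.Perm X).injective h1
      exact hcon (by rw [h2]; exact hp)
    have hUV : ∀ p ∈ U, p ∉ ⇑(η : Equiv.Perm X) '' U := by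
      intro p hp hcon
      have : p ∈ (⇑(η : Equiv.Perm X) '' U ∩ U) := ⟨hcon, hp⟩
      simp [hdisj] at this
    -- b commutes with ψ (disjoint supports)
    have hcomm : ψ * b = b * ψ := by
      apply Subtype.ext
      ext x
      simp only [Subgroup.coe_mul, Equiv.Perm.mul_apply]
      by_cases hx : x ∈ U
      · have h1 : (b : Equiv.Perm X) x = x := hbsupp _ (hUV _ hx)
        have h2 : (b : Equiv.Perm X) ((ψ : Equiv.Perm X) x) = (ψ : Equiv.Perm X) x :=
          hbsupp _ (hUV _ (hψU _ hx))
        rw [h1, h2]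
      · rw [hψ _ hx]
        by_cases hx2 : x ∈ ⇑(η : Equiv.Perm X) '' U
        · have : (b : Equiv.Perm X) x ∉ U := by
            intro hcon
            exact hUV _ hcon (hbV _ hx2)
          rw [hψ _ this]
        · rw [hbsupp _ hx2, hψ _ hx]
    set α : G := φ * b⁻¹ with hα
    have key : φ * ψ * φ⁻¹ * ψ⁻¹ = α * ψ * α⁻¹ * ψ⁻¹ := by
      have h2 : b⁻¹ * ψ * b = ψ := by
        rw [mul_assoc, hcomm, ← mul_assoc, inv_mul_cancel, one_mul]
      have : α * ψ * α⁻¹ = φ * (b⁻¹ * ψ * b) * φ⁻¹ := by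
        simp only [hα]; group
      rw [this, h2]
    have e1 : ρ (α * ψ * α⁻¹ * ψ⁻¹) ≤ ρ α + ρ (ψ * α⁻¹ * ψ⁻¹) := by
      have : α * ψ * α⁻¹ * ψ⁻¹ = α * (ψ * α⁻¹ * ψ⁻¹) := by group
      rw [this]; exact htri _ _
    have e2 : ρ (ψ * α⁻¹ * ψ⁻¹) = ρ α := by rw [hconj, hinv]
    have e3 : ρ α ≤ 2 * ρ η := by
      have hα2 : α = (φ * η * φ⁻¹) * η⁻¹ := by rw [hα, hb]; group
      calc ρ α ≤ ρ (φ * η * φ⁻¹) + ρ η⁻¹ := by rw [hα2]; exact htri _ _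
        _ = ρ η + ρ η := by rw [hconj, hinv]
        _ = 2 * ρ η := by ring
    calc ρ (φ * ψ * φ⁻¹ * ψ⁻¹) = ρ (α * ψ * α⁻¹ * ψ⁻¹) := by rw [key]
      _ ≤ ρ α + ρ (ψ * α⁻¹ * ψ⁻¹) := e1
      _ = 2 * ρ α := by rw [e2]; ring
      _ ≤ 4 * ρ η := by linarith
  refine ⟨main, ?_⟩
  rintro x ⟨η, hη, rfl⟩
  have := main η hη
  linarith
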